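/- Let r ≥ 2 and let L = ∂_x^r + c·x be the pseudo-differential operator over the differential ring ℂ[ε, ε^{−1}][x] with c = ε^{−r} r, where ∂(x) = 1. Then the unique r-th root L^{1/r} = ∂_x + Σ_{n ≥ 0} b_n ∂_x^{−n} satisfies b_0 = 0, b_1 = ⋯ = b_{r−2} = 0, b_{r−1} = ε^{−r} x, and b_r = −((r−1)/2) ε^{−r}. -/

import Mathlib

open Finset

/-- The generalized binomial coefficient `k(k−1)⋯(k−l+1)/l!` for `k : ℤ`. -/
def genBinom (k : ℤ) (l : ℕ) : ℚ :=
  (∏ i ∈ Finset.range l, ((k : ℚ) - (i : ℚ))) / (Nat.factorial l : ℚ)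

/-- A pseudo-differential operator `Σ_{n ≤ bound} a_n ∂ₓ^n` with coefficients in `R`:
a family of coefficients `a_n` indexed by `n : ℤ`, vanishing above some bound. -/
structure PDO (R : Type*) [CommRing R] where
  coeff : ℤ → R
  bound : ℤ
  coeff_eq_zero : ∀ n : ℤ, bound < n → coeff n = 0

variable {R : Type*} [CommRing R] [Algebra ℚ R]

/-- The coefficient of `∂ₓ^n` in the composition `A ∘ B`, determined by the generalized
Leibniz rule `∂ₓ^k ∘ f = Σ_{l ≥ 0} (k(k−1)⋯(k−l+1)/l!)(∂^l f) ∂ₓ^{k−l}` together with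
bilinearity and continuity: the terms `a_k · (k…(k−l+1)/l!) ∂^l(b_j)` with
`k − l + j = n` are parametrized by `k = n − B.bound + p` and `l ≤ p`. -/
def pdoCompCoeff (D : Derivation ℚ R R) (A B : PDO R) (n : ℤ) : R :=
  ∑ p ∈ Finset.range (A.bound + B.bound + 1 - n).toNat,
    ∑ l ∈ Finset.range (p + 1),
      A.coeff (n - B.bound + p) *
        (genBinom (n - B.bound + p) l • (⇑D)^[l] (B.coeff (B.bound - p + l)))

/-- Composition of pseudo-differential operators. -/
def pdoComp (D : Derivation ℚ R R) (A B : PDO R) : PDO R where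
  coeff := pdoCompCoeff D A B
  bound := A.bound + B.bound
  coeff_eq_zero := by
    intro n hn
    have h : (A.bound + B.bound + 1 - n).toNat = 0 := by omega
    simp [pdoCompCoeff, h]

/-- The pseudo-differential operator `∂ₓ^k`. -/
def pdoDelta (k : ℤ) : PDO R where
  coeff := fun n => if n = k then 1 else 0
  bound := k
  coeff_eq_zero := by
    intro n hn
    try dsimp only
    rw [if_neg (by omega)]

/-- The identity pseudo-differential operator `1 = ∂ₓ^0`. -/
def pdoOne : PDO R := pdoDelta 0

/-- Iterated composition power `A^n` of a pseudo-differential operator. -/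
def pdoNpow (D : Derivation ℚ R R) (A : PDO R) : ℕ → PDO R
  | 0 => pdoOne
  | n + 1 => pdoComp D A (pdoNpow D A n)

/-- The differential-operator part `A₊ = Σ_{n ≥ 0} a_n ∂ₓ^n`. -/
def pdoPlus (A : PDO R) : PDO R where
  coeff := fun n => if 0 ≤ n then A.coeff n else 0
  bound := max A.bound 0
  coeff_eq_zero := by
    intro n hn
    try dsimp only
    by_cases h : 0 ≤ n
    · rw [if_pos h]; exact A.coeff_eq_zero n (by omega)
    · rw [if_neg h]

/-- The purely negative part `A₋ = A − A₊ = Σ_{n ≤ −1} a_n ∂ₓ^n`. -/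
def pdoMinus (A : PDO R) : PDO R where
  coeff := fun n => if n < 0 then A.coeff n else 0
  bound := -1
  coeff_eq_zero := by
    intro n hn
    try dsimp only
    rw [if_neg (by omega)]


section Aux

lemma genBinom_zero (k : ℤ) : genBinom k 0 = 1 := by simp [genBinom]

lemma genBinom_one_one : genBinom 1 1 = 1 := by simp [genBinom]

lemma genBinom_one_eq_zero {l : ℕ} (hl : 2 ≤ l) : genBinom 1 l = 0 := by
  have h : ∏ i ∈ Finset.range l, ((1 : ℚ) - (i : ℚ)) = 0 :=
    Finset.prod_eq_zero (Finset.mem_range.2 (show 1 < l by omega)) (by norm_num)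
  simp [genBinom, h]

lemma D_iter_zero (D : Derivation ℚ R R) (l : ℕ) : (⇑D)^[l] (0 : R) = 0 :=
  Function.iterate_fixed (map_zero D) l

lemma D_iter_one (D : Derivation ℚ R R) {l : ℕ} (hl : 1 ≤ l) : (⇑D)^[l] (1 : R) = 0 := by
  cases l with
  | zero => omega
  | succ t =>
    rw [Function.iterate_succ_apply, Derivation.map_one_eq_zero]
    exact D_iter_zero D t

lemma D_nsmul (D : Derivation ℚ R R) (m : ℕ) (x : R) : D (m • x) = m • D x := by
  rw [← Nat.cast_smul_eq_nsmul ℚ, D.map_smul, Nat.cast_smul_eq_nsmul]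

lemma nsmul_cancel {x y : R} (r : ℕ) (hr : r ≠ 0) (h : r • x = r • y) : x = y := by
  have h2 := congrArg (fun z : R => ((r : ℚ)⁻¹) • z) h
  have hr' : (r : ℚ) ≠ 0 := by exact_mod_cast hr
  simpa [← Nat.cast_smul_eq_nsmul ℚ, smul_smul, inv_mul_cancel₀ hr'] using h2

/-- Canonical form of the composition coefficient when `A` has order ≤ 1 and `Bm` order ≤ m. -/
lemma pdoCompCoeff_eval (D : Derivation ℚ R R) (A Bm : PDO R) (m : ℤ)
    (hA : ∀ k : ℤ, 1 < k → A.coeff k = 0)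
    (hBm : ∀ j : ℤ, m < j → Bm.coeff j = 0)
    (hAb : 1 ≤ A.bound) (hmb : m ≤ Bm.bound) (n : ℤ) :
    pdoCompCoeff D A Bm n =
      ∑ k ∈ Finset.Icc (n - m) 1, ∑ l ∈ Finset.range (k - n + m + 1).toNat,
        A.coeff k * (genBinom k l • (⇑D)^[l] (Bm.coeff (n - k + (l : ℤ)))) := by
  have step1 : pdoCompCoeff D A Bm n =
      ∑ k ∈ Finset.Icc (n - Bm.bound) A.bound, ∑ l ∈ Finset.range (k - n + Bm.bound + 1).toNat,
        A.coeff k * (genBinom k l • (⇑D)^[l] (Bm.coeff (n - k + (l : ℤ)))) := by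
    unfold pdoCompCoeff
    refine Finset.sum_nbij' (fun p => n - Bm.bound + (p : ℤ))
      (fun k => (k - n + Bm.bound).toNat) ?_ ?_ ?_ ?_ ?_
    · intro p hp
      rw [Finset.mem_range, Int.lt_toNat] at hp
      rw [Finset.mem_Icc]
      omega
    · intro k hk
      rw [Finset.mem_Icc] at hk
      rw [Finset.mem_range, Int.lt_toNat]
      omega
    · intro p hp; omega
    · intro k hk
      rw [Finset.mem_Icc] at hk
      omega
    · intro p hp
      have h1 : (n - Bm.bound + (p : ℤ)) - n + Bm.bound + 1 = ((p + 1 : ℕ) : ℤ) := by push_cast; ring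
      rw [h1, Int.toNat_natCast]
      refine Finset.sum_congr rfl (fun l hl => ?_)
      have h2 : Bm.bound - (p : ℤ) + (l : ℤ) = n - (n - Bm.bound + (p : ℤ)) + (l : ℤ) := by ring
      rw [h2]
  rw [step1]
  have hsub : Finset.Icc (n - m) 1 ⊆ Finset.Icc (n - Bm.bound) A.bound := by
    intro k hk
    rw [Finset.mem_Icc] at *
    omega
  rw [← Finset.sum_subset hsub ?_]
  · refine Finset.sum_congr rfl (fun k hk => ?_)
    rw [Finset.mem_Icc] at hk
    refine (Finset.sum_subset ?_ ?_).symm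
    · apply Finset.range_subset_range.2
      omega
    · intro l hl hl'
      rw [Finset.mem_range, Int.lt_toNat] at hl
      rw [Finset.mem_range, Int.lt_toNat, not_lt] at hl'
      rw [hBm _ (by omega), D_iter_zero, smul_zero, mul_zero]
  · intro k hk hk'
    rw [Finset.mem_Icc] at hk
    rw [Finset.mem_Icc, not_and_or, not_le, not_le] at hk'
    rcases hk' with hk' | hk'
    · refine Finset.sum_eq_zero (fun l hl => ?_)
      rw [hBm _ (by omega), D_iter_zero, smul_zero, mul_zero]
    · refine Finset.sum_eq_zero (fun l hl => ?_)
      rw [hA _ hk', zero_mul]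

end Aux


section Master

/-- Master computation: coefficients of `B^m` near the top, given that `b_0,…,b_{s-1}` vanish. -/
lemma master [Nontrivial R] (D : Derivation ℚ R R) (s : ℕ) (B : PDO R)
    (hB1 : B.coeff 1 = 1) (htop : ∀ n : ℤ, 1 < n → B.coeff n = 0)
    (hzero : ∀ j : ℤ, 1 - (s : ℤ) ≤ j → j ≤ 0 → B.coeff j = 0)
    (m : ℕ) (hm : 1 ≤ m) :
    (∀ j : ℤ, (m : ℤ) < j → (pdoNpow D B m).coeff j = 0) ∧
    (m : ℤ) ≤ (pdoNpow D B m).bound ∧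
    (pdoNpow D B m).coeff m = 1 ∧
    (∀ j : ℤ, (m : ℤ) - s ≤ j → j < (m : ℤ) → (pdoNpow D B m).coeff j = 0) ∧
    (pdoNpow D B m).coeff ((m : ℤ) - s - 1) = m • B.coeff (-(s : ℤ)) ∧
    (1 ≤ s → (pdoNpow D B m).coeff ((m : ℤ) - s - 2)
        = m • B.coeff (-(s : ℤ) - 1) + (m.choose 2) • D (B.coeff (-(s : ℤ)))) := by
  have hBb : 1 ≤ B.bound := by
    by_contra h
    have h2 := B.coeff_eq_zero 1 (by omega)
    rw [hB1] at h2
    exact one_ne_zero h2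
  induction m, hm using Nat.le_induction with
  | base =>
    have hc : ∀ n : ℤ, (pdoNpow D B 1).coeff n = B.coeff n := by
      intro n
      have h1 : (pdoNpow D B 1).coeff n = pdoCompCoeff D B pdoOne n := rfl
      have hone : ∀ j : ℤ, (0 : ℤ) < j → (pdoOne : PDO R).coeff j = 0 := by
        intro j hj
        simp only [pdoOne, pdoDelta]
        rw [if_neg (by omega)]
      rw [h1, pdoCompCoeff_eval D B pdoOne 0 htop hone hBb (le_refl _) n]
      by_cases hn : n ≤ 1
      · rw [Finset.sum_eq_single_of_mem n (by rw [Finset.mem_Icc]; omega)]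
        · have h2 : (n - n + 0 + 1).toNat = 1 := by omega
          rw [h2, Finset.sum_range_one]
          have h3 : n - n + ((0 : ℕ) : ℤ) = 0 := by omega
          rw [h3]
          simp [pdoOne, pdoDelta, genBinom_zero]
        · intro k hk hkn
          rw [Finset.mem_Icc] at hk
          refine Finset.sum_eq_zero (fun l hl => ?_)
          by_cases hc : n - k + (l : ℤ) = 0
          · have : (pdoOne : PDO R).coeff (n - k + (l : ℤ)) = 1 := by
              simp only [pdoOne, pdoDelta]; rw [if_pos hc]
            rw [this, D_iter_one D (by omega), smul_zero, mul_zero]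
          · have : (pdoOne : PDO R).coeff (n - k + (l : ℤ)) = 0 := by
              simp only [pdoOne, pdoDelta]; rw [if_neg hc]
            rw [this, D_iter_zero, smul_zero, mul_zero]
      · rw [htop n (by omega)]
        have : Finset.Icc (n - 0) 1 = ∅ := Finset.Icc_eq_empty (by omega)
        rw [this, Finset.sum_empty]
    refine ⟨fun j hj => by rw [hc]; exact htop j (by omega), ?_, ?_, ?_, ?_, ?_⟩
    · show (1 : ℤ) ≤ B.bound + (pdoOne : PDO R).bound
      have : (pdoOne : PDO R).bound = 0 := rfl
      omega
    · rw [show ((1 : ℕ) : ℤ) = 1 by norm_num, hc]; exact hB1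
    · intro j h1 h2
      rw [hc]
      exact hzero j (by omega) (by omega)
    · rw [hc, one_smul]
      congr 1
      omega
    · intro hs
      rw [hc]
      have h2 : ((1 : ℕ) : ℤ) - s - 2 = -(s : ℤ) - 1 := by omega
      rw [h2]
      simp
  | succ m hm ih =>
    obtain ⟨ih1, ih2, ih3, ih4, ih5, ih6⟩ := ih
    set P := pdoNpow D B m with hP
    have heval : ∀ n : ℤ, (pdoNpow D B (m + 1)).coeff n =
        ∑ k ∈ Finset.Icc (n - m) 1, ∑ l ∈ Finset.range (k - n + m + 1).toNat,
          B.coeff k * (genBinom k l • (⇑D)^[l] (P.coeff (n - k + (l : ℤ)))) := by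
      intro n
      have h1 : (pdoNpow D B (m + 1)).coeff n = pdoCompCoeff D B P n := rfl
      rw [h1, pdoCompCoeff_eval D B P m htop ih1 hBb ih2 n]
    have hbound : (pdoNpow D B (m + 1)).bound = B.bound + P.bound := rfl
    refine ⟨?_, ?_, ?_, ?_, ?_, ?_⟩
    · intro j hj
      rw [heval]
      have : Finset.Icc (j - m) 1 = ∅ := Finset.Icc_eq_empty (by omega)
      rw [this, Finset.sum_empty]
    · rw [hbound]; push_cast; omega
    · rw [heval]
      have h1 : ((m + 1 : ℕ) : ℤ) - m = 1 := by push_cast; ring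
      rw [h1, Finset.Icc_self, Finset.sum_singleton]
      have h2 : ((1 : ℤ) - ((m + 1 : ℕ) : ℤ) + m + 1).toNat = 1 := by omega
      rw [h2, Finset.sum_range_one]
      have h3 : ((m + 1 : ℕ) : ℤ) - 1 + ((0 : ℕ) : ℤ) = (m : ℤ) := by push_cast; ring
      rw [h3, ih3, hB1, genBinom_zero, Function.iterate_zero_apply, one_smul, mul_one]
    · intro j h1 h2
      rw [heval]
      refine Finset.sum_eq_zero (fun k hk => ?_)
      rw [Finset.mem_Icc] at hk
      by_cases hk1 : k = 1
      · subst hk1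
        refine Finset.sum_eq_zero (fun l hl => ?_)
        rw [Finset.mem_range, Int.lt_toNat] at hl
        by_cases hlt : j - 1 + (l : ℤ) = (m : ℤ)
        · rw [hlt, ih3, D_iter_one D (by omega), smul_zero, mul_zero]
        · rw [ih4 _ (by omega) (by omega), D_iter_zero, smul_zero, mul_zero]
      · refine Finset.sum_eq_zero (fun l hl => ?_)
        rw [hzero k (by omega) (by omega), zero_mul]
    · rw [heval]
      have hsub : ({-(s : ℤ), 1} : Finset ℤ) ⊆ Finset.Icc (((m + 1 : ℕ) : ℤ) - s - 1 - m) 1 := by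
        intro k hk
        simp only [Finset.mem_insert, Finset.mem_singleton] at hk
        rw [Finset.mem_Icc]
        omega
      rw [← Finset.sum_subset hsub ?_]
      · rw [Finset.sum_pair (by omega : -(s : ℤ) ≠ 1)]
        have e1 : ∑ l ∈ Finset.range ((-(s : ℤ)) - (((m + 1 : ℕ) : ℤ) - s - 1) + m + 1).toNat,
            B.coeff (-(s : ℤ)) * (genBinom (-(s : ℤ)) l •
              (⇑D)^[l] (P.coeff (((m + 1 : ℕ) : ℤ) - s - 1 - (-(s : ℤ)) + (l : ℤ)))) =
            B.coeff (-(s : ℤ)) := by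
          have h2 : ((-(s : ℤ)) - (((m + 1 : ℕ) : ℤ) - s - 1) + m + 1).toNat = 1 := by omega
          rw [h2, Finset.sum_range_one]
          have h3 : ((m + 1 : ℕ) : ℤ) - s - 1 - (-(s : ℤ)) + ((0 : ℕ) : ℤ) = (m : ℤ) := by omega
          rw [h3, ih3, genBinom_zero, Function.iterate_zero_apply, one_smul, mul_one]
        have e2 : ∑ l ∈ Finset.range ((1 : ℤ) - (((m + 1 : ℕ) : ℤ) - s - 1) + m + 1).toNat,
            B.coeff 1 * (genBinom 1 l •
              (⇑D)^[l] (P.coeff (((m + 1 : ℕ) : ℤ) - s - 1 - 1 + (l : ℤ)))) =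
            m • B.coeff (-(s : ℤ)) := by
          rw [Finset.sum_eq_single_of_mem 0 (by rw [Finset.mem_range]; omega)]
          · have h3 : ((m + 1 : ℕ) : ℤ) - s - 1 - 1 + ((0 : ℕ) : ℤ) = (m : ℤ) - s - 1 := by
              push_cast; ring
            rw [h3, ih5, hB1, genBinom_zero, Function.iterate_zero_apply, one_smul, one_mul]
          · intro l hl hl0
            by_cases hl1 : l = 1
            · subst hl1
              have h3 : ((m + 1 : ℕ) : ℤ) - s - 1 - 1 + ((1 : ℕ) : ℤ) = (m : ℤ) - s := by
                push_cast; ring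
              rw [h3]
              have hz : (⇑D)^[1] (P.coeff ((m : ℤ) - s)) = 0 := by
                rcases Nat.eq_zero_or_pos s with hs0 | hs0
                · subst hs0
                  simp only [Nat.cast_zero, sub_zero]
                  rw [ih3, Function.iterate_one, Derivation.map_one_eq_zero]
                · rw [ih4 _ (by omega) (by omega), Function.iterate_one, map_zero]
              rw [hz, smul_zero, mul_zero]
            · rw [genBinom_one_eq_zero (by omega), zero_smul, mul_zero]
        rw [e1, e2, succ_nsmul, add_comm]
      · intro k hk hk'
        rw [Finset.mem_Icc] at hk
        simp only [Finset.mem_insert, Finset.mem_singleton, not_or] at hk'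
        refine Finset.sum_eq_zero (fun l hl => ?_)
        rw [hzero k (by omega) (by omega), zero_mul]
    · intro hs
      rw [heval]
      have hne1 : -(s : ℤ) - 1 ≠ -(s : ℤ) := by omega
      have hne2 : -(s : ℤ) - 1 ≠ 1 := by omega
      have hne3 : -(s : ℤ) ≠ 1 := by omega
      have hsub : ({-(s : ℤ) - 1, -(s : ℤ), 1} : Finset ℤ) ⊆
          Finset.Icc (((m + 1 : ℕ) : ℤ) - s - 2 - m) 1 := by
        intro k hk
        simp only [Finset.mem_insert, Finset.mem_singleton] at hk
        rw [Finset.mem_Icc]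
        omega
      rw [← Finset.sum_subset hsub ?_]
      · have hnotmem : (-(s : ℤ) - 1) ∉ ({-(s : ℤ), 1} : Finset ℤ) := by
          simp only [Finset.mem_insert, Finset.mem_singleton]
          omega
        rw [Finset.sum_insert hnotmem, Finset.sum_pair hne3]
        set n : ℤ := ((m + 1 : ℕ) : ℤ) - s - 2 with hn
        have e1 : ∑ l ∈ Finset.range ((-(s : ℤ) - 1) - n + m + 1).toNat,
            B.coeff (-(s : ℤ) - 1) * (genBinom (-(s : ℤ) - 1) l •
              (⇑D)^[l] (P.coeff (n - (-(s : ℤ) - 1) + (l : ℤ)))) = B.coeff (-(s : ℤ) - 1) := by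
          have h2 : ((-(s : ℤ) - 1) - n + m + 1).toNat = 1 := by omega
          rw [h2, Finset.sum_range_one]
          have h3 : n - (-(s : ℤ) - 1) + ((0 : ℕ) : ℤ) = (m : ℤ) := by omega
          rw [h3, ih3, genBinom_zero, Function.iterate_zero_apply, one_smul, mul_one]
        have e2 : ∑ l ∈ Finset.range ((-(s : ℤ)) - n + m + 1).toNat,
            B.coeff (-(s : ℤ)) * (genBinom (-(s : ℤ)) l •
              (⇑D)^[l] (P.coeff (n - (-(s : ℤ)) + (l : ℤ)))) = 0 := by
          refine Finset.sum_eq_zero (fun l hl => ?_)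
          rw [Finset.mem_range, Int.lt_toNat] at hl
          by_cases hl0 : l = 0
          · subst hl0
            have h3 : n - (-(s : ℤ)) + ((0 : ℕ) : ℤ) = (m : ℤ) - 1 := by omega
            rw [h3, ih4 _ (by omega) (by omega), Function.iterate_zero_apply, smul_zero, mul_zero]
          · have hl1 : l = 1 := by omega
            subst hl1
            have h3 : n - (-(s : ℤ)) + ((1 : ℕ) : ℤ) = (m : ℤ) := by omega
            rw [h3, ih3, D_iter_one D (by omega), smul_zero, mul_zero]
        have e3 : ∑ l ∈ Finset.range ((1 : ℤ) - n + m + 1).toNat,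
            B.coeff 1 * (genBinom 1 l • (⇑D)^[l] (P.coeff (n - 1 + (l : ℤ)))) =
            m • B.coeff (-(s : ℤ) - 1) + (m.choose 2) • D (B.coeff (-(s : ℤ)))
              + m • D (B.coeff (-(s : ℤ))) := by
          have hsub2 : ({0, 1} : Finset ℕ) ⊆ Finset.range ((1 : ℤ) - n + m + 1).toNat := by
            intro l hl
            simp only [Finset.mem_insert, Finset.mem_singleton] at hl
            rw [Finset.mem_range]
            omega
          rw [← Finset.sum_subset hsub2 ?_]
          · rw [Finset.sum_pair (by omega : (0 : ℕ) ≠ 1)]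
            have h3 : n - 1 + ((0 : ℕ) : ℤ) = (m : ℤ) - s - 2 := by omega
            have h4 : n - 1 + ((1 : ℕ) : ℤ) = (m : ℤ) - s - 1 := by omega
            rw [h3, h4, Function.iterate_zero_apply, Function.iterate_one,
              ih6 hs, ih5, D_nsmul, hB1, genBinom_zero, genBinom_one_one, one_smul, one_smul,
              one_mul, one_mul]
          · intro l hl hl'
            simp only [Finset.mem_insert, Finset.mem_singleton, not_or] at hl'
            rw [genBinom_one_eq_zero (by omega), zero_smul, mul_zero]
        rw [e1, e2, e3]
        have hch : (m + 1).choose 2 = m.choose 2 + m := by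
          rw [Nat.choose_succ_succ, Nat.choose_one_right, Nat.add_comm]
        rw [hch, succ_nsmul, add_nsmul]
        abel
      · intro k hk hk'
        rw [Finset.mem_Icc] at hk
        simp only [Finset.mem_insert, Finset.mem_singleton, not_or] at hk'
        refine Finset.sum_eq_zero (fun l hl => ?_)
        rw [hzero k (by omega) (by omega), zero_mul]

end Master


/-- The coefficient ring `ℂ[ε, ε^{−1}][x]`. -/
abbrev CoeffRing : Type := Polynomial (LaurentPolynomial ℂ)

/-- The derivation `∂ = d/dx` on `ℂ[ε, ε^{−1}][x]` (so `∂(x) = 1` and `∂(ε) = 0`). -/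
noncomputable def Dx : Derivation ℚ CoeffRing CoeffRing where
  toFun := Polynomial.derivative
  map_add' := by simp
  map_smul' := by intro q p; simp
  map_one_eq_zero' := by simp
  leibniz' := by
    intro a b
    show Polynomial.derivative (a * b) = a • Polynomial.derivative b + b • Polynomial.derivative a
    simp only [Polynomial.derivative_mul, smul_eq_mul]
    ring

open LaurentPolynomial Polynomial in
/-- Let `r ≥ 2` and let `L = ∂ₓ^r + ε^{−r} r x` over the differential
ring `ℂ[ε, ε^{−1}][x]` with `∂(x) = 1`.  Then any `r`-th root
`L^{1/r} = ∂ₓ + Σ_{n ≥ 0} bₙ ∂ₓ^{−n}` (it is unique) satisfies `b₀ = 0`,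
`b₁ = ⋯ = b_{r−2} = 0`, `b_{r−1} = ε^{−r} x`, and `b_r = −((r−1)/2) ε^{−r}`. -/
theorem initial_condition_root_coeffs (r : ℕ) (hr : 2 ≤ r)
    (L : PDO CoeffRing)
    (hLr : L.coeff (r : ℤ) = 1)
    (hL0 : L.coeff 0 = Polynomial.C ((r : ℂ) • LaurentPolynomial.T (-(r : ℤ))) * Polynomial.X)
    (hLother : ∀ n : ℤ, n ≠ (r : ℤ) → n ≠ 0 → L.coeff n = 0)
    (B : PDO CoeffRing)
    (hB1 : B.coeff 1 = 1) (hBtop : ∀ n : ℤ, 1 < n → B.coeff n = 0)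
    (hBr : (pdoNpow Dx B r).coeff = L.coeff) :
    B.coeff 0 = 0 ∧
    (∀ n : ℕ, 1 ≤ n → n ≤ r - 2 → B.coeff (-(n : ℤ)) = 0) ∧
    B.coeff (-((r : ℤ) - 1)) = Polynomial.C (LaurentPolynomial.T (-(r : ℤ))) * Polynomial.X ∧
    B.coeff (-(r : ℤ)) = Polynomial.C ((-(((r : ℂ) - 1) / 2)) • LaurentPolynomial.T (-(r : ℤ))) := by
  have hb : ∀ s : ℕ, s ≤ r - 2 → B.coeff (-(s : ℤ)) = 0 := by
    intro s
    induction s using Nat.strong_induction_on with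
    | _ s ih =>
      intro hs
      have hzero : ∀ j : ℤ, 1 - (s : ℤ) ≤ j → j ≤ 0 → B.coeff j = 0 := by
        intro j h1 h2
        have hj : j = -(((-j).toNat : ℕ) : ℤ) := by omega
        rw [hj]
        exact ih (-j).toNat (by omega) (by omega)
      have H := master Dx s B hB1 hBtop hzero r (by omega)
      have h4 := H.2.2.2.2.1
      rw [hBr, hLother _ (by omega) (by omega)] at h4
      exact nsmul_cancel r (by omega) (show r • B.coeff (-(s : ℤ)) = r • (0 : CoeffRing) by
        rw [smul_zero]; exact h4.symm)
  have hzeroR : ∀ j : ℤ, 1 - ((r - 1 : ℕ) : ℤ) ≤ j → j ≤ 0 → B.coeff j = 0 := by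
    intro j h1 h2
    have hj : j = -(((-j).toNat : ℕ) : ℤ) := by omega
    rw [hj]
    exact hb (-j).toNat (by omega)
  have H := master Dx (r - 1) B hB1 hBtop hzeroR r (by omega)
  have key : (r : ℕ) • (Polynomial.C (T (-(r : ℤ))) * Polynomial.X : CoeffRing)
      = Polynomial.C ((r : ℂ) • T (-(r : ℤ))) * Polynomial.X := by
    rw [show ((r : ℂ) • T (-(r : ℤ))) = r • T (-(r : ℤ)) from Nat.cast_smul_eq_nsmul ℂ r _,
      map_nsmul, smul_mul_assoc]
  have h5 : B.coeff (-(((r - 1 : ℕ) : ℕ) : ℤ)) = Polynomial.C (T (-(r : ℤ))) * Polynomial.X := by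
    have h4 := H.2.2.2.2.1
    rw [hBr] at h4
    have hidx : (r : ℤ) - ((r - 1 : ℕ) : ℤ) - 1 = 0 := by omega
    rw [hidx, hL0] at h4
    exact nsmul_cancel r (by omega) (by rw [key]; exact h4.symm)
  have hidxneg : -(((r - 1 : ℕ) : ℕ) : ℤ) = -((r : ℤ) - 1) := by omega
  have h6 : B.coeff (-(r : ℤ)) =
      Polynomial.C ((-(((r : ℂ) - 1) / 2)) • T (-(r : ℤ))) := by
    have H6 := H.2.2.2.2.2 (by omega)
    rw [hBr] at H6
    have hidx2 : (r : ℤ) - ((r - 1 : ℕ) : ℤ) - 2 = -1 := by omega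
    rw [hidx2, hLother (-1) (by omega) (by omega), h5] at H6
    have hDx : Dx (Polynomial.C (T (-(r : ℤ))) * Polynomial.X : CoeffRing)
        = Polynomial.C (T (-(r : ℤ))) := by
      show Polynomial.derivative _ = _
      simp
    have hidx3 : -(((r - 1 : ℕ) : ℕ) : ℤ) - 1 = -(r : ℤ) := by omega
    rw [hDx, hidx3] at H6
    -- H6 : 0 = r • B.coeff (-r) + r.choose 2 • C (T (-r))
    have key2 : (r : ℕ) • (Polynomial.C ((-(((r : ℂ) - 1) / 2)) • T (-(r : ℤ))) : CoeffRing)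
        = -((r.choose 2) • (Polynomial.C (T (-(r : ℤ))) : CoeffRing)) := by
      rw [← map_nsmul Polynomial.C r, ← map_nsmul Polynomial.C (r.choose 2), ← map_neg]
      congr 1
      rw [← Nat.cast_smul_eq_nsmul ℂ r, ← Nat.cast_smul_eq_nsmul ℂ (r.choose 2), smul_smul,
        ← neg_smul]
      congr 1
      rw [Nat.cast_choose_two]
      ring
    refine nsmul_cancel r (by omega) ?_
    rw [key2]
    exact eq_neg_of_add_eq_zero_left H6.symm
  refine ⟨by simpa using hb 0 (by omega), fun n h1 h2 => hb n h2, ?_, h6⟩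
  rw [← hidxneg]
  exact h5
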